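/- Let g and (h_i)_{i∈ψ} be independent random variables, each exponentially distributed with rate 1, where ψ is a nonempty finite index set. Fix r>0, α≥2, distances d_i>0 for i∈ψ, and N≥0, and let η = g r^{-α}/(N + Σ_{i∈ψ} h_i d_i^{-α}). Then for all T ≥ 0 and S_th ≥ 0, the cell-centre conditional coverage probability satisfies P(η > T | η > S_th) = [e^{-max(T,S_th) r^α N} ∏_{i∈ψ}(1 + max(T,S_th) r^α d_i^{-α})^{-1}] / [e^{-S_th r^α N} ∏_{i∈ψ}(1 + S_th r^α d_i^{-α})^{-1}]. -/

import Mathlib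

open MeasureTheory ProbabilityTheory

open scoped ENNReal NNReal
open Real Set

section Aux

lemma expMeasure_one_def : expMeasure 1 = volume.withDensity (exponentialPDF 1) := rfl

lemma expMeasure_Iic_zero : expMeasure 1 (Iic (0:ℝ)) = 0 := by
  have h1 : expMeasure 1 (Iio (0:ℝ)) = 0 := by
    rw [expMeasure_one_def, withDensity_apply _ measurableSet_Iio]
    exact lintegral_exponentialPDF_of_nonpos le_rfl
  have h2 : expMeasure 1 ({0} : Set ℝ) = 0 := by
    rw [expMeasure_one_def, withDensity_apply _ (measurableSet_singleton _)]
    exact setLIntegral_measure_zero _ _ Real.volume_singleton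
  have hle := measure_union_le (μ := expMeasure 1) (Iio (0:ℝ)) {0}
  rw [Set.Iio_union_right, h1, h2, add_zero] at hle
  exact le_antisymm hle zero_le

lemma expMeasure_Ioi {t : ℝ} (ht : 0 ≤ t) :
    expMeasure 1 (Ioi t) = ENNReal.ofReal (Real.exp (-t)) := by
  rw [expMeasure_one_def, withDensity_apply _ measurableSet_Ioi]
  have hcong : ∀ᵐ x ∂(volume.restrict (Ioi t)),
      exponentialPDF 1 x = ENNReal.ofReal (Real.exp (-x)) := by
    filter_upwards [ae_restrict_mem measurableSet_Ioi] with x hx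
    rw [exponentialPDF_of_nonneg (le_of_lt (lt_of_le_of_lt ht hx))]
    norm_num
  rw [lintegral_congr_ae hcong,
    ← ofReal_integral_eq_lintegral_ofReal
      (by simpa [IntegrableOn] using exp_neg_integrableOn_Ioi t one_pos)
      (Filter.Eventually.of_forall fun x => (Real.exp_pos _).le),
    integral_exp_neg_Ioi]

lemma laplace_expMeasure {a : ℝ} (ha : 0 ≤ a) :
    ∫⁻ y, ENNReal.ofReal (Real.exp (-(a * y))) ∂(expMeasure 1)
      = ENNReal.ofReal (1 + a)⁻¹ := by
  have hb : (0:ℝ) < 1 + a := by linarith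
  have hmeas : Measurable fun y : ℝ => ENNReal.ofReal (Real.exp (-(a * y))) :=
    Measurable.ennreal_ofReal (by fun_prop)
  have hpdf : Measurable (exponentialPDF 1) := (measurable_exponentialPDFReal 1).ennreal_ofReal
  rw [expMeasure_one_def, lintegral_withDensity_eq_lintegral_mul _ hpdf hmeas]
  have hfun : ∀ x : ℝ, ((fun x => exponentialPDF 1 x) *
        fun x => ENNReal.ofReal (Real.exp (-(a * x)))) x
      = (Ici (0:ℝ)).indicator (fun x => ENNReal.ofReal (Real.exp (-(1 + a) * x))) x := by
    intro x
    simp only [Pi.mul_apply]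
    by_cases hx : (0:ℝ) ≤ x
    · rw [exponentialPDF_of_nonneg hx, Set.indicator_of_mem (Set.mem_Ici.mpr hx),
        ← ENNReal.ofReal_mul (by positivity), one_mul, ← Real.exp_add]
      ring_nf
    · rw [exponentialPDF_of_neg (lt_of_not_ge hx),
        Set.indicator_of_notMem (by simpa using hx), zero_mul]
  rw [lintegral_congr hfun, lintegral_indicator measurableSet_Ici _,
    ← ofReal_integral_eq_lintegral_ofReal
      (Iff.mpr integrableOn_Ici_iff_integrableOn_Ioi (exp_neg_integrableOn_Ioi 0 hb))
      (Filter.Eventually.of_forall fun x => (Real.exp_pos _).le),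
    integral_Ici_eq_integral_Ioi]
  have hcomp := integral_comp_mul_left_Ioi (fun x => Real.exp (-x)) 0 hb
  simp only [mul_zero] at hcomp
  simp only [neg_mul] at hcomp ⊢
  rw [hcomp, integral_exp_neg_Ioi, neg_zero, Real.exp_zero, smul_eq_mul, mul_one]

lemma lintegral_prod_of_iIndepFun {Ω : Type*} [MeasurableSpace Ω] {μ : Measure Ω}
    [IsProbabilityMeasure μ] {ι : Type*} {F : ι → Ω → ℝ≥0∞}
    (hmeas : ∀ i, Measurable (F i))
    (hindep : iIndepFun F μ) (s : Finset ι) :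
    ∫⁻ ω, ∏ i ∈ s, F i ω ∂μ = ∏ i ∈ s, ∫⁻ ω, F i ω ∂μ := by
  classical
  induction s using Finset.induction_on with
  | empty => simp
  | @insert i s hi ih =>
    have hind : IndepFun (F i) (∏ j ∈ s, F j) μ :=
      (hindep.indepFun_finset_prod_of_notMem hmeas hi).symm
    have hgm : Measurable (∏ j ∈ s, F j) := by
      rw [Finset.prod_fn]
      exact Finset.measurable_prod s fun j _ => hmeas j
    have hmul := lintegral_mul_eq_lintegral_mul_lintegral_of_indepFun
      (hmeas i) hgm hind
    simp only [Pi.mul_apply, Finset.prod_apply] at hmul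
    simp only [Finset.prod_insert hi]
    rw [hmul, ih]

end Aux

section Cov

lemma coverage_prob {Ω : Type*} [MeasurableSpace Ω] (μ : Measure Ω) [IsProbabilityMeasure μ]
    {ι : Type*} [Fintype ι] [Nonempty ι]
    (g : Ω → ℝ) (h : ι → Ω → ℝ)
    (hg_meas : Measurable g) (hh_meas : ∀ i, Measurable (h i))
    (hg_exp : Measure.map g μ = expMeasure 1)
    (hh_exp : ∀ i, Measure.map (h i) μ = expMeasure 1)
    (h_indep : iIndepFun
      (fun o : Option ι => Option.elim o g h) μ)
    (r α N : ℝ) (hr : 0 < r) (hN : 0 ≤ N)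
    (d : ι → ℝ) (hd : ∀ i, 0 < d i)
    (S : ℝ) (hS : 0 ≤ S) :
    μ {ω | S < g ω * r ^ (-α) / (N + ∑ i, h i ω * d i ^ (-α))}
      = ENNReal.ofReal (Real.exp (-(S * r ^ α * N)) *
          ∏ i, (1 + S * r ^ α * d i ^ (-α))⁻¹) := by
  classical
  haveI : IsProbabilityMeasure (expMeasure 1) := isProbabilityMeasure_expMeasure one_pos
  set c : ι → ℝ := fun i => d i ^ (-α) with hc
  have hcpos : ∀ i, 0 < c i := fun i => Real.rpow_pos_of_pos (hd i) _
  have hrα : (0:ℝ) < r ^ α := Real.rpow_pos_of_pos hr _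
  set k : ℝ := S * r ^ α with hk
  have hk0 : 0 ≤ k := mul_nonneg hS hrα.le
  set V : Ω → ℝ := fun ω => ∑ i, h i ω * c i with hV
  have hV_meas : Measurable V := Finset.measurable_sum _ fun i _ => (hh_meas i).mul_const _
  set b : Ω → ℝ := fun ω => k * (N + V ω) with hb
  have hb_meas : Measurable b := measurable_const.mul (measurable_const.add hV_meas)
  have hfo_meas : ∀ o : Option ι, Measurable (Option.elim o g h) := by
    intro o; cases o
    · exact hg_meas
    · exact hh_meas _
  -- a.e. positivity of the fadings
  have hae : ∀ᵐ ω ∂μ, ∀ i, 0 < h i ω := by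
    rw [ae_all_iff]
    intro i
    rw [ae_iff]
    have hset : {ω | ¬ 0 < h i ω} = h i ⁻¹' (Iic 0) := by
      ext ω; simp [not_lt]
    rw [hset, ← Measure.map_apply (hh_meas i) measurableSet_Iic, hh_exp i,
      expMeasure_Iic_zero]
  -- rewrite the event a.e.
  have hEset : {ω | S < g ω * r ^ (-α) / (N + ∑ i, h i ω * c i)} =ᵐ[μ] {ω | b ω < g ω} := by
    rw [Filter.eventuallyEq_set]
    filter_upwards [hae] with ω hω
    have hVpos : 0 < V ω :=
      Finset.sum_pos (fun i _ => mul_pos (hω i) (hcpos i)) Finset.univ_nonempty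
    have hW : 0 < N + V ω := by linarith
    show (S < g ω * r ^ (-α) / (N + ∑ i, h i ω * c i)) ↔ b ω < g ω
    have h1 : (S < g ω * r ^ (-α) / (N + V ω)) ↔ S * (N + V ω) * r ^ α < g ω := by
      rw [lt_div_iff₀ hW, Real.rpow_neg hr.le, ← div_eq_mul_inv, lt_div_iff₀ hrα]
    have h2 : b ω = S * (N + V ω) * r ^ α := by rw [hb]; ring
    rw [show (N + ∑ i, h i ω * c i) = N + V ω from rfl, h1, h2]
  rw [measure_congr hEset]
  -- independence of b and g
  have hbg_indep : IndepFun b g μ := by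
    have hbase := h_indep.indepFun_finset ({none} : Finset (Option ι)) ({none}ᶜ)
      disjoint_compl_right hfo_meas
    have hφ₁ : Measurable fun x : ({none} : Finset (Option ι)) → ℝ =>
        x ⟨none, Finset.mem_singleton_self _⟩ := measurable_pi_apply _
    have hφ₂ : Measurable fun x : (({none}ᶜ : Finset (Option ι)) → ℝ) =>
        k * (N + ∑ i : ι, x ⟨some i, by simp⟩ * c i) :=
      measurable_const.mul (measurable_const.add
        (Finset.measurable_sum _ fun i _ => (measurable_pi_apply _).mul_const _))
    exact ((hbase.comp hφ₁ hφ₂)).symm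
  have hpair : μ.map (fun ω => (b ω, g ω)) = (μ.map b).prod (μ.map g) :=
    (indepFun_iff_map_prod_eq_prod_map_map hb_meas.aemeasurable hg_meas.aemeasurable).mp
      hbg_indep
  have hset : MeasurableSet {p : ℝ × ℝ | p.1 < p.2} :=
    measurableSet_lt measurable_fst measurable_snd
  have hmaps : μ {ω | b ω < g ω} = ∫⁻ x, (expMeasure 1) (Ioi x) ∂(μ.map b) := by
    rw [show {ω | b ω < g ω} = (fun ω => (b ω, g ω)) ⁻¹' {p : ℝ × ℝ | p.1 < p.2} from rfl,
      ← Measure.map_apply (hb_meas.prodMk hg_meas) hset, hpair, hg_exp,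
      Measure.prod_apply hset]
    rfl
  rw [hmaps]
  -- b is a.e. nonnegative
  have hb_nonneg : ∀ᵐ x ∂(μ.map b), 0 ≤ x := by
    rw [ae_map_iff hb_meas.aemeasurable (measurableSet_Ici (a := (0:ℝ)))]
    filter_upwards [hae] with ω hω
    have hVnn : 0 ≤ V ω :=
      Finset.sum_nonneg fun i _ => (mul_pos (hω i) (hcpos i)).le
    show 0 ≤ b ω
    rw [hb]; positivity
  have h5 : ∫⁻ x, (expMeasure 1) (Ioi x) ∂(μ.map b)
      = ∫⁻ x, ENNReal.ofReal (Real.exp (-x)) ∂(μ.map b) :=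
    lintegral_congr_ae (hb_nonneg.mono fun x hx => expMeasure_Ioi hx)
  have h6 : ∫⁻ x, ENNReal.ofReal (Real.exp (-x)) ∂(μ.map b)
      = ∫⁻ ω, ENNReal.ofReal (Real.exp (-b ω)) ∂μ :=
    lintegral_map (Measurable.ennreal_ofReal (by fun_prop)) hb_meas
  rw [h5, h6]
  -- factor the exponential
  have hsplit : ∀ ω, ENNReal.ofReal (Real.exp (-b ω))
      = ENNReal.ofReal (Real.exp (-(k * N))) *
        ∏ i, ENNReal.ofReal (Real.exp (-(k * c i * h i ω))) := by
    intro ω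
    have hsum : ∑ i, -(k * c i * h i ω) = -(k * V ω) := by
      rw [hV, Finset.mul_sum, ← Finset.sum_neg_distrib]
      exact Finset.sum_congr rfl fun i _ => by ring
    have hexp : -b ω = -(k * N) + ∑ i, -(k * c i * h i ω) := by
      rw [hsum, hb]; ring
    rw [hexp, Real.exp_add, Real.exp_sum,
      ENNReal.ofReal_mul (Real.exp_pos _).le,
      ENNReal.ofReal_prod_of_nonneg (fun i _ => (Real.exp_pos _).le)]
  simp only [hsplit]
  rw [lintegral_const_mul _ (show Measurable fun ω =>
      ∏ i, ENNReal.ofReal (Real.exp (-(k * c i * h i ω))) from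
    Finset.measurable_prod Finset.univ fun i _ =>
      Measurable.ennreal_ofReal (by fun_prop))]
  -- product of independent factors
  set φ : (o : Option ι) → ℝ → ℝ≥0∞ := fun o => Option.elim o (fun _ => (1:ℝ≥0∞))
    (fun i y => ENNReal.ofReal (Real.exp (-(k * c i * y)))) with hφdef
  have hφ : ∀ o, Measurable (φ o) := by
    intro o; cases o
    · exact measurable_const
    · exact Measurable.ennreal_ofReal (by fun_prop)
  have hGind : iIndepFun
      (fun o => φ o ∘ (Option.elim o g h)) μ := h_indep.comp φ hφ
  have hGmeas : ∀ o, Measurable (φ o ∘ Option.elim o g h) :=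
    fun o => (hφ o).comp (hfo_meas o)
  have hprod := lintegral_prod_of_iIndepFun hGmeas hGind Finset.univ
  simp only [Fintype.prod_option, Function.comp_apply, Option.elim, hφdef,
    lintegral_one, measure_univ, one_mul] at hprod
  rw [hprod]
  -- evaluate each factor via the Laplace transform
  have hfac : ∀ i, ∫⁻ ω, ENNReal.ofReal (Real.exp (-(k * c i * h i ω))) ∂μ
      = ENNReal.ofReal (1 + k * c i)⁻¹ := by
    intro i
    have : ∫⁻ ω, ENNReal.ofReal (Real.exp (-(k * c i * h i ω))) ∂μ
        = ∫⁻ y, ENNReal.ofReal (Real.exp (-(k * c i * y))) ∂(μ.map (h i)) :=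
      (lintegral_map (Measurable.ennreal_ofReal
        (Real.measurable_exp.comp (measurable_id.const_mul (k * c i)).neg)) (hh_meas i)).symm
    rw [this, hh_exp i, laplace_expMeasure (mul_nonneg hk0 (hcpos i).le)]
  simp only [hfac]
  rw [← ENNReal.ofReal_prod_of_nonneg (fun i _ => inv_nonneg.mpr
      (by have := mul_nonneg hk0 (hcpos i).le; linarith)),
    ← ENNReal.ofReal_mul (Real.exp_pos _).le]

end Cov


/-- cell-centre conditional coverage probability.  With SINR
`η = g r^{-α}/(N + ∑ i, h i * d i^{-α})` (unit-rate exponential independent fadings),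
for `T ≥ 0` and `S_th ≥ 0`,
`P(η > T | η > S_th)` equals
`[e^{-max(T,S_th) r^α N} ∏ i (1 + max(T,S_th) r^α d i^{-α})⁻¹] /
 [e^{-S_th r^α N} ∏ i (1 + S_th r^α d i^{-α})⁻¹]`. -/
theorem cell_centre_conditional_coverage
    {Ω : Type*} [MeasurableSpace Ω] (μ : Measure Ω) [IsProbabilityMeasure μ]
    {ι : Type*} [Fintype ι] [Nonempty ι]
    (g : Ω → ℝ) (h : ι → Ω → ℝ)
    (hg_meas : Measurable g) (hh_meas : ∀ i, Measurable (h i))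
    (hg_exp : Measure.map g μ = expMeasure 1)
    (hh_exp : ∀ i, Measure.map (h i) μ = expMeasure 1)
    (h_indep : iIndepFun
      (fun o : Option ι => Option.elim o g h) μ)
    (r α N : ℝ) (hr : 0 < r) (hα : 2 ≤ α) (hN : 0 ≤ N)
    (d : ι → ℝ) (hd : ∀ i, 0 < d i)
    (T Sth : ℝ) (hT : 0 ≤ T) (hSth : 0 ≤ Sth) :
    ((μ[|{ω | Sth < g ω * r ^ (-α) / (N + ∑ i, h i ω * d i ^ (-α))}])
        {ω | T < g ω * r ^ (-α) / (N + ∑ i, h i ω * d i ^ (-α))}).toReal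
      = (Real.exp (-(max T Sth * r ^ α * N)) *
            ∏ i, (1 + max T Sth * r ^ α * d i ^ (-α))⁻¹) /
        (Real.exp (-(Sth * r ^ α * N)) *
            ∏ i, (1 + Sth * r ^ α * d i ^ (-α))⁻¹) := by
  classical
  have hmax : 0 ≤ max T Sth := le_trans hT (le_max_left T Sth)
  have hcovS := coverage_prob μ g h hg_meas hh_meas hg_exp hh_exp h_indep
    r α N hr hN d hd Sth hSth
  have hcovM := coverage_prob μ g h hg_meas hh_meas hg_exp hh_exp h_indep
    r α N hr hN d hd (max T Sth) hmax
  have hW_meas : Measurable fun ω => g ω * r ^ (-α) / (N + ∑ i, h i ω * d i ^ (-α)) :=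
    (hg_meas.mul_const _).div (measurable_const.add
      (Finset.measurable_sum _ fun i _ => (hh_meas i).mul_const _))
  have hA_meas : MeasurableSet {ω | Sth < g ω * r ^ (-α) / (N + ∑ i, h i ω * d i ^ (-α))} :=
    measurableSet_lt measurable_const hW_meas
  rw [cond_apply hA_meas]
  have hinter : {ω | Sth < g ω * r ^ (-α) / (N + ∑ i, h i ω * d i ^ (-α))}
      ∩ {ω | T < g ω * r ^ (-α) / (N + ∑ i, h i ω * d i ^ (-α))}
      = {ω | max T Sth < g ω * r ^ (-α) / (N + ∑ i, h i ω * d i ^ (-α))} := by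
    ext ω
    simp only [Set.mem_inter_iff, Set.mem_setOf_eq, max_lt_iff]
    tauto
  rw [hinter, hcovS, hcovM]
  have hprodpos : ∀ S : ℝ, 0 ≤ S →
      0 < Real.exp (-(S * r ^ α * N)) * ∏ i, (1 + S * r ^ α * d i ^ (-α))⁻¹ := by
    intro S hS
    refine mul_pos (Real.exp_pos _) (Finset.prod_pos fun i _ => inv_pos.mpr ?_)
    have h1 : 0 ≤ S * r ^ α * d i ^ (-α) :=
      mul_nonneg (mul_nonneg hS (Real.rpow_pos_of_pos hr α).le)
        (Real.rpow_pos_of_pos (hd i) _).le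
    linarith
  rw [ENNReal.toReal_mul, ENNReal.toReal_inv, ENNReal.toReal_ofReal (hprodpos Sth hSth).le,
    ENNReal.toReal_ofReal (hprodpos _ hmax).le, inv_mul_eq_div]
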